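/- Colorful Carathéodory theorem: Let d ≥ 1 and let P_1, …, P_{d+1} ⊆ ℝ^d be finite sets such that 0 ∈ conv(P_i) for every i = 1, …, d+1. Then there exist points c_1 ∈ P_1, …, c_{d+1} ∈ P_{d+1} such that 0 ∈ conv({c_1, …, c_{d+1}}). -/

import Mathlib

open Finset Function Metric Module RealInnerProductSpace

private lemma aux_not_affIndep {d : ℕ} (hd : 1 ≤ d)
    {x : EuclideanSpace ℝ (Fin d)} (hx : x ≠ 0)
    {c : Fin (d + 1) → EuclideanSpace ℝ (Fin d)}
    (h : ∀ i, ⟪x, c i⟫ = ⟪x, x⟫) :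
    ¬ AffineIndependent ℝ c := by
  intro hAI
  haveI : Fact (finrank ℝ (EuclideanSpace ℝ (Fin d)) = (d - 1) + 1) :=
    ⟨by rw [finrank_euclideanSpace, Fintype.card_fin]; omega⟩
  set W := (ℝ ∙ x)ᗮ with hW
  have hfr : finrank ℝ W = d - 1 := Submodule.finrank_orthogonal_span_singleton hx
  rw [affineIndependent_iff_linearIndependent_vsub ℝ c 0] at hAI
  have hmem : ∀ j : {i : Fin (d + 1) // i ≠ 0}, c j -ᵥ c 0 ∈ W := by
    intro j
    rw [hW, Submodule.mem_orthogonal_singleton_iff_inner_right]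
    have : (c (j : Fin (d + 1)) -ᵥ c 0) = c (j : Fin (d + 1)) - c 0 := rfl
    rw [this, inner_sub_right, h, h]
    ring
  have hLI : LinearIndependent ℝ (fun j : {i : Fin (d + 1) // i ≠ 0} =>
      (⟨c j -ᵥ c 0, hmem j⟩ : W)) := by
    apply LinearIndependent.of_comp W.subtype
    exact hAI
  have hcard := hLI.fintype_card_le_finrank
  rw [hfr] at hcard
  have : Fintype.card {i : Fin (d + 1) // i ≠ 0} = d := by
    simp [Fintype.card_subtype_compl]
  omega

private lemma aux_reduce {n : ℕ} {V : Type*} [AddCommGroup V] [Module ℝ V]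
    {c : Fin (n + 1) → V} (hdep : ¬ AffineIndependent ℝ c)
    {w : Fin (n + 1) → ℝ} (hw0 : ∀ i, 0 ≤ w i) :
    ∃ (w' : Fin (n + 1) → ℝ) (i0 : Fin (n + 1)), (∀ i, 0 ≤ w' i) ∧
      (∑ i, w' i = ∑ i, w i) ∧ (∑ i, w' i • c i) = (∑ i, w i • c i) ∧ w' i0 = 0 := by
  rw [affineIndependent_iff_of_fintype] at hdep
  push_neg at hdep
  obtain ⟨μ, hμ0, hμv, i', hμi'⟩ := hdep
  rw [Finset.weightedVSub_eq_linear_combination _ hμ0] at hμv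
  have hpos : ∃ i, 0 < μ i := by
    by_contra hc
    push_neg at hc
    have hz : ∀ i ∈ Finset.univ, μ i = 0 := by
      rw [← Finset.sum_eq_zero_iff_of_nonpos (fun j _ => hc j)]
      exact hμ0
    exact hμi' (hz i' (Finset.mem_univ i'))
  set s : Finset (Fin (n + 1)) := Finset.univ.filter (fun i => 0 < μ i) with hs
  have hsne : s.Nonempty := by
    obtain ⟨i, hi⟩ := hpos
    exact ⟨i, by simp [hs, hi]⟩
  obtain ⟨i0, hi0s, hi0min⟩ := s.exists_min_image (fun i => w i / μ i) hsne
  have hμi0 : 0 < μ i0 := by simpa [hs] using hi0s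
  set t := w i0 / μ i0 with ht
  have ht0 : 0 ≤ t := div_nonneg (hw0 _) hμi0.le
  refine ⟨fun i => w i - t * μ i, i0, ?_, ?_, ?_, ?_⟩
  · intro i
    show 0 ≤ w i - t * μ i
    by_cases h : 0 < μ i
    · have hle : t ≤ w i / μ i := hi0min i (by simp [hs, h])
      have : t * μ i ≤ w i := by
        rw [← le_div_iff₀ h]; exact hle
      linarith
    · push_neg at h
      have : t * μ i ≤ 0 := mul_nonpos_of_nonneg_of_nonpos ht0 h
      linarith [hw0 i]
  · rw [Finset.sum_sub_distrib, ← Finset.mul_sum, hμ0, mul_zero, sub_zero]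
  · simp_rw [sub_smul, Finset.sum_sub_distrib, mul_smul, ← Finset.smul_sum, hμv,
      smul_zero, sub_zero]
  · simp only [ht]
    field_simp
    ring

set_option maxHeartbeats 1000000 in
/-- **Colorful Carathéodory theorem.** Given `d + 1` finite color classes
`P 0, …, P d` in `ℝ^d`, each containing the origin in its convex hull, there is
a choice of one point from each color class whose convex hull contains the
origin. -/
theorem colorful_caratheodory (d : ℕ) (hd : 1 ≤ d)
    (P : Fin (d + 1) → Finset (EuclideanSpace ℝ (Fin d)))
    (hP : ∀ i, (0 : EuclideanSpace ℝ (Fin d)) ∈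
      convexHull ℝ ((P i : Set (EuclideanSpace ℝ (Fin d))))) :
    ∃ c : Fin (d + 1) → EuclideanSpace ℝ (Fin d),
      (∀ i, c i ∈ P i) ∧
      (0 : EuclideanSpace ℝ (Fin d)) ∈ convexHull ℝ (Set.range c) := by
  classical
  let E := EuclideanSpace ℝ (Fin d)
  have hPne : ∀ i, (P i).Nonempty := by
    intro i
    by_contra h
    rw [Finset.not_nonempty_iff_eq_empty] at h
    simpa [h] using hP i
  haveI : ∀ i, Nonempty (P i) := fun i => ⟨⟨(hPne i).choose, (hPne i).choose_spec⟩⟩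
  set K : (∀ i, P i) → Set E := fun c => convexHull ℝ (Set.range fun i => ((c i : E))) with hK
  have hKmem : ∀ (c : ∀ i, P i) (i), (c i : E) ∈ K c := fun c i =>
    subset_convexHull _ _ ⟨i, rfl⟩
  have hKne : ∀ c, (K c).Nonempty := fun c => ⟨_, hKmem c 0⟩
  have hKcpt : ∀ c, IsCompact (K c) := fun c => (Set.finite_range _).isCompact_convexHull ℝ
  have hKcvx : ∀ c, Convex ℝ (K c) := fun c => convex_convexHull _ _
  obtain ⟨c, hc⟩ := Finite.exists_min (fun c : (∀ i, P i) => infDist 0 (K c))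
  obtain ⟨x, hxK, hxmin⟩ :=
    exists_norm_eq_iInf_of_complete_convex (hKne c) ((hKcpt c).isComplete) (hKcvx c) 0
  have hIx : infDist (0 : E) (K c) = ‖x‖ := by
    rw [infDist_eq_iInf]
    simp only [dist_eq_norm (E := E)]
    rw [← hxmin, zero_sub, norm_neg]
  by_cases hx : x = 0
  · exact ⟨fun i => (c i : E), fun i => (c i).2, hx ▸ hxK⟩
  exfalso
  have hinner : ∀ y ∈ K c, ‖x‖ ^ 2 ≤ ⟪x, y⟫ := by
    have h0 := (norm_eq_iInf_iff_real_inner_le_zero (hKcvx c) hxK).mp hxmin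
    intro y hy
    have h2 := h0 y hy
    have h3 : ⟪(0 : E) - x, y - x⟫ = ⟪x, x⟫ - ⟪x, y⟫ := by
      rw [zero_sub, inner_neg_left, inner_sub_right]
      ring
    rw [h3, real_inner_self_eq_norm_sq] at h2
    linarith
  have hxK2 : x ∈ convexHull ℝ (Set.range fun i => ((c i : E))) := hxK
  rw [convexHull_range_eq_exists_affineCombination] at hxK2
  obtain ⟨s, w, hw0, hw1, hwx⟩ := hxK2
  rw [Finset.affineCombination_eq_linear_combination s _ _ hw1] at hwx
  set v : Fin (d + 1) → E := fun i => (c i : E) with hv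
  set W : Fin (d + 1) → ℝ := fun i => if i ∈ s then w i else 0 with hWdef
  have hW0 : ∀ i, 0 ≤ W i := by
    intro i
    by_cases h : i ∈ s <;> simp [hWdef, h]
    exact hw0 i h
  have hW1 : ∑ i, W i = 1 := by
    rw [hWdef]
    rw [Finset.sum_ite_mem, Finset.univ_inter]
    exact hw1
  have hWx : ∑ i, W i • v i = x := by
    rw [hWdef]
    simp only [ite_smul, zero_smul]
    rw [Finset.sum_ite_mem, Finset.univ_inter]
    exact hwx
  have key : ∃ (w' : Fin (d + 1) → ℝ) (i0 : Fin (d + 1)), (∀ i, 0 ≤ w' i) ∧ (∑ i, w' i = 1)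
      ∧ (∑ i, w' i • v i = x) ∧ w' i0 = 0 := by
    by_cases hall : ∀ i, 0 < W i
    · have e0 : ⟪x, (∑ i, W i • v i : E)⟫ = ∑ i, W i * ⟪x, v i⟫ := by
        rw [inner_sum]
        simp [real_inner_smul_right]
      have e1 : ⟪x, x⟫ = ∑ i, W i * ⟪x, v i⟫ := by
        rw [← e0, hWx]
      have hsum0 : ∑ i, W i * (⟪x, v i⟫ - ‖x‖ ^ 2) = 0 := by
        simp only [mul_sub, Finset.sum_sub_distrib, ← Finset.sum_mul, hW1, one_mul]
        rw [← e1, real_inner_self_eq_norm_sq]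
        ring
      have hterm := (Finset.sum_eq_zero_iff_of_nonneg (fun i _ => by
        have := hinner (v i) (hKmem c i)
        have := hW0 i
        nlinarith)).mp hsum0
      have hface : ∀ i, ⟪x, v i⟫ = ⟪x, x⟫ := by
        intro i
        have h1 := hterm i (Finset.mem_univ i)
        rcases mul_eq_zero.mp h1 with h | h
        · exact absurd h (hall i).ne'
        · rw [real_inner_self_eq_norm_sq]; linarith
      have hdep := aux_not_affIndep hd hx hface
      obtain ⟨w', i0, h1, h2, h3, h4⟩ := aux_reduce hdep hW0
      exact ⟨w', i0, h1, by rw [h2, hW1], by rw [h3, hWx], h4⟩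
    · push_neg at hall
      obtain ⟨i0, hi0⟩ := hall
      exact ⟨W, i0, hW0, hW1, hWx, le_antisymm hi0 (hW0 i0)⟩
  obtain ⟨w', i0, hw'0, hw'1, hw'x, hw'i0⟩ := key
  obtain ⟨p, hpP, hpx⟩ : ∃ p ∈ P i0, ⟪x, p⟫ ≤ 0 := by
    by_contra hcon
    push_neg at hcon
    have hsub : (P i0 : Set E) ⊆ {y | 0 < ⟪x, y⟫} := fun y hy => hcon y hy
    have hcvx : Convex ℝ {y : E | 0 < ⟪x, y⟫} :=
      convex_halfSpace_gt ⟨fun a b => inner_add_right x a b,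
        fun r a => real_inner_smul_right x a r⟩ 0
    have h0 := convexHull_min hsub hcvx (hP i0)
    simpa using h0
  set c' : ∀ i, P i := Function.update c i0 ⟨p, hpP⟩ with hc'
  set v' : Fin (d + 1) → E := fun i => (c' i : E) with hv'
  have hv'i : ∀ i, i ≠ i0 → v' i = v i := by
    intro i hi
    simp [hv', hc', Function.update_of_ne hi, hv]
  have hv'i0 : v' i0 = p := by simp [hv', hc']
  have hxK' : x ∈ K c' := by
    rw [← hw'x]
    have heq : ∑ i, w' i • v i = ∑ i, w' i • v' i := by
      apply Finset.sum_congr rfl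
      intro i _
      by_cases h : i = i0
      · subst h; rw [hw'i0]; simp
      · rw [hv'i i h]
    rw [heq]
    exact Convex.sum_mem (hKcvx c') (fun i _ => hw'0 i) hw'1 (fun i _ => hKmem c' i)
  have hpK' : p ∈ K c' := hv'i0 ▸ hKmem c' i0
  have hxx : 0 < ‖x‖ ^ 2 := by
    have := norm_pos_iff.mpr hx
    positivity
  have hpnex : p - x ≠ 0 := by
    intro h
    rw [sub_eq_zero] at h
    rw [h, real_inner_self_eq_norm_sq] at hpx
    linarith
  set q := ‖p - x‖ ^ 2 with hqdef
  have hq : 0 < q := by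
    have := norm_pos_iff.mpr hpnex
    positivity
  set t := min 1 (‖x‖ ^ 2 / q) with htdef
  have ht0 : 0 < t := lt_min one_pos (div_pos hxx hq)
  have ht1 : t ≤ 1 := min_le_left _ _
  have htq : t * q ≤ ‖x‖ ^ 2 := by
    rw [← le_div_iff₀ hq]
    exact min_le_right _ _
  set z := x + t • (p - x) with hz
  have hzK : z ∈ K c' := by
    have hzz : z = (1 - t) • x + t • p := by
      rw [hz]; module
    rw [hzz]
    exact (hKcvx c') hxK' hpK' (by linarith) ht0.le (by ring)
  have hznorm : ‖z‖ ^ 2 < ‖x‖ ^ 2 := by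
    rw [hz, norm_add_sq_real]
    have e1 : ⟪x, t • (p - x)⟫ = t * (⟪x, p⟫ - ‖x‖ ^ 2) := by
      rw [real_inner_smul_right, inner_sub_right, real_inner_self_eq_norm_sq]
    have e2 : ‖t • (p - x)‖ ^ 2 = t ^ 2 * q := by
      rw [norm_smul, Real.norm_eq_abs, abs_of_pos ht0]
      ring
    rw [e1, e2]
    linarith [mul_pos ht0 hxx, mul_le_mul_of_nonneg_left htq ht0.le,
      mul_nonneg ht0.le (neg_nonneg.mpr hpx)]
  have hzx : ‖z‖ < ‖x‖ := lt_of_pow_lt_pow_left₀ 2 (norm_nonneg x) hznorm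
  have h1 : infDist (0 : E) (K c') ≤ ‖z‖ := by
    have h0 := infDist_le_dist_of_mem (x := (0 : E)) hzK
    simpa [dist_eq_norm] using h0
  have h2 := hc c'
  rw [hIx] at h2
  linarith
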